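/- Let n ≥ 1 and let α₁, …, αₙ be positive real numbers with α₁·α₂ ⋯ αₙ = 1. Then for every real q with 0 < q < 1, ((1+q)/(1−q))^n ≤ ∏_{i=1}^n (1 + q^{αᵢ})/(1 − q^{αᵢ}), i.e. Θ¹_{ℤ^n}(q) ≤ Θ¹_{α₁ℤ ⊕ ⋯ ⊕ αₙℤ}(q); moreover the inequality is strict unless αᵢ = 1 for all i. -/

import Mathlib

open Real Set

lemma sinh_lt_mul_cosh {x : ℝ} (hx : 0 < x) : Real.sinh x < x * Real.cosh x := by
  have h : StrictMonoOn (fun y : ℝ => y * Real.cosh y - Real.sinh y) (Set.Ici 0) := by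
    apply strictMonoOn_of_deriv_pos (convex_Ici 0)
    · fun_prop
    · intro y hy
      rw [interior_Ici] at hy
      have : HasDerivAt (fun y : ℝ => y * Real.cosh y - Real.sinh y)
          (1 * Real.cosh y + y * Real.sinh y - Real.cosh y) y :=
        ((hasDerivAt_id y).mul (Real.hasDerivAt_cosh y)).sub (Real.hasDerivAt_sinh y)
      rw [this.deriv]
      have h1 := Real.sinh_pos_iff.2 hy
      have := mul_pos hy h1
      nlinarith
  have := h (Set.mem_Ici.2 le_rfl) (Set.mem_Ici.2 hx.le) hx
  simpa using this

lemma sinh_div_strictMono : StrictMonoOn (fun x : ℝ => Real.sinh x / x) (Set.Ioi 0) := by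
  apply strictMonoOn_of_deriv_pos (convex_Ioi 0)
  · exact ContinuousOn.div (Real.continuous_sinh.continuousOn) continuousOn_id
      (fun x hx => ne_of_gt hx)
  · intro x hx
    rw [interior_Ioi] at hx
    have hx0 : x ≠ 0 := ne_of_gt hx
    have : HasDerivAt (fun x : ℝ => Real.sinh x / x)
        ((Real.cosh x * x - Real.sinh x * 1) / x ^ 2) x :=
      (Real.hasDerivAt_sinh x).div (hasDerivAt_id x) hx0
    rw [this.deriv]
    have h1 := sinh_lt_mul_cosh hx
    have h2 : (0:ℝ) < x ^ 2 := by positivity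
    apply div_pos _ h2
    nlinarith

-- G u = -u / sinh u is strictly monotone on Ioi 0
lemma neg_div_sinh_strictMono : StrictMonoOn (fun u : ℝ => -(u / Real.sinh u)) (Set.Ioi 0) := by
  intro u hu v hv huv
  have hsu := Real.sinh_pos_iff.2 (Set.mem_Ioi.1 hu)
  have hsv := Real.sinh_pos_iff.2 (Set.mem_Ioi.1 hv)
  have h := sinh_div_strictMono hu hv huv
  simp only at h
  have hu0 : (0:ℝ) < u := hu
  have hv0 : (0:ℝ) < v := hv
  have : v / Real.sinh v < u / Real.sinh u := by
    rw [div_lt_div_iff₀ hsv hsu]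
    rw [div_lt_div_iff₀ hu0 hv0] at h
    nlinarith
  linarith

section Fconv

variable (b : ℝ)

noncomputable def Ffun (t : ℝ) : ℝ :=
  Real.log (1 + Real.exp (-(b * Real.exp t))) - Real.log (1 - Real.exp (-(b * Real.exp t)))

lemma E_pos (t : ℝ) : 0 < Real.exp (-(b * Real.exp t)) := Real.exp_pos _

lemma E_lt_one (hb : 0 < b) (t : ℝ) : Real.exp (-(b * Real.exp t)) < 1 := by
  rw [Real.exp_lt_one_iff]
  have := Real.exp_pos t
  nlinarith

lemma Ffun_hasDeriv (hb : 0 < b) (t : ℝ) :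
    HasDerivAt (Ffun b) (-(b * Real.exp t / Real.sinh (b * Real.exp t))) t := by
  set u := b * Real.exp t with hu
  have hu0 : 0 < u := by positivity
  set E := Real.exp (-u) with hE
  have hE0 : 0 < E := Real.exp_pos _
  have hE1 : E < 1 := by
    rw [hE, Real.exp_lt_one_iff]; linarith
  have hinner : HasDerivAt (fun t : ℝ => -(b * Real.exp t)) (-(b * Real.exp t)) t := by
    exact ((Real.hasDerivAt_exp t).const_mul b).neg
  have hEd : HasDerivAt (fun t : ℝ => Real.exp (-(b * Real.exp t))) (E * -(b * Real.exp t)) t := by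
    simpa [hE, hu] using hinner.exp
  have h1 : HasDerivAt (fun t : ℝ => Real.log (1 + Real.exp (-(b * Real.exp t))))
      ((E * -(b * Real.exp t)) / (1 + E)) t := by
    have := ((hasDerivAt_const t (1:ℝ)).add hEd).log (by show (1:ℝ) + Real.exp (-(b * Real.exp t)) ≠ 0; positivity)
    simpa [hE, hu] using this
  have h2 : HasDerivAt (fun t : ℝ => Real.log (1 - Real.exp (-(b * Real.exp t))))
      ((-(E * -(b * Real.exp t))) / (1 - E)) t := by
    have := ((hasDerivAt_const t (1:ℝ)).sub hEd).log (by show (1:ℝ) - Real.exp (-(b * Real.exp t)) ≠ 0; intro h; rw [sub_eq_zero] at h; exact absurd h.symm hE1.ne)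
    simpa [hE, hu] using this
  have : HasDerivAt (Ffun b) (E * -(b * Real.exp t) / (1 + E) - -(E * -(b * Real.exp t)) / (1 - E)) t :=
    h1.sub h2
  convert this using 1
  have hsinh : Real.sinh u = (Real.exp u - Real.exp (-u)) / 2 := Real.sinh_eq u
  have hEu : E * Real.exp u = 1 := by rw [hE, ← Real.exp_add]; simp
  have hsu : 0 < Real.sinh u := Real.sinh_pos_iff.2 hu0
  have heu := Real.exp_pos u
  have h1E : (0:ℝ) < 1 + E := by linarith
  have h2E : (0:ℝ) < 1 - E := by linarith
  clear_value u E
  rw [← hu]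
  have hkey : 2 * E * Real.sinh u = 1 - E ^ 2 := by
    rw [hsinh, ← hE]; linear_combination hEu
  field_simp
  linear_combination hkey

lemma Ffun_strictConvex (hb : 0 < b) : StrictConvexOn ℝ Set.univ (Ffun b) := by
  have hc : Continuous (fun t : ℝ => Real.exp (-(b * Real.exp t))) := by fun_prop
  apply StrictMono.strictConvexOn_univ_of_deriv
  · apply Continuous.sub
    · exact ((continuous_const.add hc).log (fun t => by have := E_pos b t; show (1:ℝ) + Real.exp (-(b * Real.exp t)) ≠ 0; positivity))
    · exact ((continuous_const.sub hc).log
        (fun t => by have := E_lt_one b hb t; show (1:ℝ) - Real.exp (-(b * Real.exp t)) ≠ 0; intro h; rw [sub_eq_zero] at h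
                     exact absurd h.symm this.ne))
  · have hd : deriv (Ffun b) = fun t => -(b * Real.exp t / Real.sinh (b * Real.exp t)) := by
      funext t; exact (Ffun_hasDeriv b hb t).deriv
    rw [hd]
    intro s t hst
    have hs : b * Real.exp s ∈ Set.Ioi (0:ℝ) := by have := Real.exp_pos s; exact mul_pos hb this
    have ht : b * Real.exp t ∈ Set.Ioi (0:ℝ) := by have := Real.exp_pos t; exact mul_pos hb this
    have hlt : b * Real.exp s < b * Real.exp t :=
      mul_lt_mul_of_pos_left (Real.exp_lt_exp.2 hst) hb
    exact neg_div_sinh_strictMono hs ht hlt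

end Fconv

/-- Proposition: among orthogonal lattices `α₁ℤ ⊕ ⋯ ⊕ αₙℤ` of unit volume,
`ℤⁿ` minimizes the ℓ¹-theta function, strictly unless all `αᵢ = 1`. -/
theorem theta_one_orthogonal_minimal
    (n : ℕ) (hn : 1 ≤ n) (α : Fin n → ℝ) (hα : ∀ i, 0 < α i)
    (hprod : ∏ i, α i = 1) (q : ℝ) (hq0 : 0 < q) (hq1 : q < 1) :
    ((1 + q) / (1 - q)) ^ n ≤ ∏ i, (1 + q ^ (α i)) / (1 - q ^ (α i)) ∧
    ((∃ i, α i ≠ 1) →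
      ((1 + q) / (1 - q)) ^ n < ∏ i, (1 + q ^ (α i)) / (1 - q ^ (α i))) := by
  have hb : 0 < -Real.log q := by have := Real.log_neg hq0 hq1; linarith
  set b := -Real.log q with hbdef
  set p : Fin n → ℝ := fun i => Real.log (α i) with hp
  have hn' : (0:ℝ) < n := by exact_mod_cast hn
  have hwpos : (0:ℝ) < (n:ℝ)⁻¹ := inv_pos.2 hn'
  have hqα : ∀ i, Real.exp (-(b * Real.exp (p i))) = q ^ (α i) := by
    intro i
    rw [hp, Real.exp_log (hα i), Real.rpow_def_of_pos hq0]
    congr 1; rw [hbdef]; ring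
  have hq1' : ∀ i, q ^ (α i) < 1 := fun i => Real.rpow_lt_one hq0.le hq1 (hα i)
  have hq0' : ∀ i, 0 < q ^ (α i) := fun i => Real.rpow_pos_of_pos hq0 _
  have hlogdiv : ∀ x : ℝ, 0 < x → x < 1 →
      Real.log (1 + x) - Real.log (1 - x) = Real.log ((1 + x) / (1 - x)) := by
    intro x h0 h1
    rw [Real.log_div (by positivity) (by intro h; rw [sub_eq_zero] at h; linarith [h.symm ▸ h1])]
  have hFi : ∀ i, Ffun b (p i) = Real.log ((1 + q ^ (α i)) / (1 - q ^ (α i))) := by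
    intro i
    unfold Ffun
    rw [hqα i, hlogdiv _ (hq0' i) (hq1' i)]
  have hF0 : Ffun b 0 = Real.log ((1 + q) / (1 - q)) := by
    unfold Ffun
    have : Real.exp (-(b * Real.exp 0)) = q := by
      rw [Real.exp_zero, mul_one, hbdef, neg_neg, Real.exp_log hq0]
    rw [this, hlogdiv q hq0 hq1]
  have hsc := Ffun_strictConvex b hb
  have hw1 : ∑ _i : Fin n, ((n:ℝ)⁻¹) = 1 := by
    rw [Finset.sum_const, Finset.card_univ, Fintype.card_fin, nsmul_eq_mul]
    field_simp
  have hsump : ∑ i, p i = 0 := by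
    rw [hp, ← Real.log_prod (fun i _ => (hα i).ne'), hprod, Real.log_one]
  have hcenter : ∑ i : Fin n, ((n:ℝ)⁻¹) • p i = 0 := by
    rw [← Finset.smul_sum, hsump, smul_zero]
  have hsmulsum : ∑ i : Fin n, ((n:ℝ)⁻¹) • Ffun b (p i)
      = (n:ℝ)⁻¹ * ∑ i, Ffun b (p i) := by
    rw [← Finset.smul_sum, smul_eq_mul]
  have hprodeq : ∏ i, (1 + q ^ (α i)) / (1 - q ^ (α i))
      = Real.exp (∑ i, Ffun b (p i)) := by
    rw [Real.exp_sum]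
    refine Finset.prod_congr rfl (fun i _ => ?_)
    rw [hFi i, Real.exp_log (div_pos (by linarith [hq0' i]) (by linarith [hq1' i]))]
  have hpow : ((1 + q) / (1 - q)) ^ n = Real.exp ((n:ℝ) * Ffun b 0) := by
    rw [Real.exp_nat_mul, hF0, Real.exp_log (div_pos (by linarith) (by linarith))]
  constructor
  · have hle := hsc.convexOn.map_sum_le (fun _ _ => hwpos.le) hw1
      (fun i _ => Set.mem_univ (p i))
    rw [hcenter, hsmulsum] at hle
    have h2 := mul_le_mul_of_nonneg_left hle hn'.le
    rw [← mul_assoc, mul_inv_cancel₀ hn'.ne', one_mul] at h2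
    rw [hpow, hprodeq]
    exact Real.exp_le_exp.2 h2
  · rintro ⟨i, hi⟩
    have hpi : p i ≠ 0 := by
      intro h
      apply hi
      have := Real.exp_log (hα i)
      rw [hp] at h
      simp only at h
      rw [h, Real.exp_zero] at this
      exact this.symm
    have hex : ∃ j ∈ Finset.univ, ∃ k ∈ Finset.univ (α := Fin n), p j ≠ p k := by
      by_contra hcon
      push_neg at hcon
      have hall : ∀ j, p j = p i := fun j =>
        hcon j (Finset.mem_univ j) i (Finset.mem_univ i)
      have hsum2 : ∑ j, p j = (n:ℝ) * p i := by
        rw [Finset.sum_congr rfl (fun j _ => hall j), Finset.sum_const, Finset.card_univ,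
          Fintype.card_fin, nsmul_eq_mul]
      rw [hsump] at hsum2
      exact hpi (by
        rcases mul_eq_zero.1 hsum2.symm with h | h
        · exact absurd h hn'.ne'
        · exact h)
    have hlt := hsc.map_sum_lt (fun _ _ => hwpos) hw1 (fun i _ => Set.mem_univ (p i)) hex
    rw [hcenter, hsmulsum] at hlt
    have h2 := mul_lt_mul_of_pos_left hlt hn'
    rw [← mul_assoc, mul_inv_cancel₀ hn'.ne', one_mul] at h2
    rw [hpow, hprodeq]
    exact Real.exp_lt_exp.2 h2
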